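/- Analyticity for R(M'_S4): if Λ is a nonempty set of modal formulas closed under subformulas and ṽ ∈ PLV'(Λ), then there exists a level valuation v ∈ L'_S4 whose restriction to Λ coincides with ṽ. -/

import Mathlib

/-- Modal formulas over signature Σ = {¬, □, →, ∨, ∧}. -/
inductive MF
  | var : ℕ → MF
  | neg : MF → MF
  | box : MF → MF
  | imp : MF → MF → MF
  | dis : MF → MF → MF
  | con : MF → MF → MF
deriving DecidableEq

/-- The three truth values 0, 1, 2. -/
inductive V3
  | z | o | t
deriving DecidableEq

/-- Designated values D = {1, 2}. -/
def Des : Set V3 := {V3.o, V3.t}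

def negOp : V3 → Set V3
  | .z => {.o, .t}
  | .o => {.z}
  | .t => {.z}

def boxOp : V3 → Set V3
  | .z => {.z}
  | .o => {.z}
  | .t => {.t}

def impOp : V3 → V3 → Set V3
  | .z, .z => {.o, .t}
  | .z, .o => {.o, .t}
  | .z, .t => {.t}
  | .o, .z => {.z}
  | .o, .o => {.o, .t}
  | .o, .t => {.t}
  | .t, .z => {.z}
  | .t, .o => {.o}
  | .t, .t => {.t}

def disOp : V3 → V3 → Set V3
  | .z, .z => {.z}
  | .z, .o => {.o, .t}
  | .o, .z => {.o, .t}
  | .o, .o => {.o, .t}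
  | _, _ => {.t}

def conOp : V3 → V3 → Set V3
  | .z, _ => {.z}
  | _, .z => {.z}
  | .t, .t => {.t}
  | _, _ => {.o}

/-- Valuations over the reduced Nmatrix M'_S4. -/
def IsVal (v : MF → V3) : Prop :=
  (∀ α, v (.neg α) ∈ negOp (v α)) ∧
  (∀ α, v (.box α) ∈ boxOp (v α)) ∧
  (∀ α β, v (.imp α β) ∈ impOp (v α) (v β)) ∧
  (∀ α β, v (.dis α β) ∈ disOp (v α) (v β)) ∧
  (∀ α β, v (.con α β) ∈ conOp (v α) (v β))

/-- The levels L_k. -/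
def LevelS4 : ℕ → Set (MF → V3)
  | 0 => {v | IsVal v}
  | (k+1) => {v ∈ LevelS4 k | ∀ α, (∀ w ∈ LevelS4 k, w α ∈ Des) → v α = V3.t}

/-- Level valuations L'_S4 = ⋂_{k ≥ 0} L_k. -/
def LVS4 : Set (MF → V3) := ⋂ k, LevelS4 k

/-- Theorems of the Hilbert calculus H_S4 : classical propositional axioms over
{¬,→,∨,∧}, plus K, T, 4, with modus ponens and necessitation. -/
inductive S4Thm : MF → Prop
  | ax1 (α β : MF) : S4Thm (α.imp (β.imp α))
  | ax2 (α β γ : MF) : S4Thm ((α.imp (β.imp γ)).imp ((α.imp β).imp (α.imp γ)))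
  | ax3 (α β : MF) : S4Thm (α.imp (β.imp (α.con β)))
  | ax4 (α β : MF) : S4Thm ((α.con β).imp α)
  | ax5 (α β : MF) : S4Thm ((α.con β).imp β)
  | ax6 (α β : MF) : S4Thm (α.imp (α.dis β))
  | ax7 (α β : MF) : S4Thm (β.imp (α.dis β))
  | ax8 (α β γ : MF) : S4Thm ((α.imp γ).imp ((β.imp γ).imp ((α.dis β).imp γ)))
  | ax9 (α β : MF) : S4Thm ((β.imp α).imp ((β.imp α.neg).imp β.neg))
  | ax10 (α β : MF) : S4Thm (α.imp (α.neg.imp β))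
  | dne (α : MF) : S4Thm (α.neg.neg.imp α)
  | axK (α β : MF) : S4Thm ((α.imp β).box.imp (α.box.imp β.box))
  | axT (α : MF) : S4Thm (α.box.imp α)
  | axFour (α : MF) : S4Thm (α.box.imp α.box.box)
  | mp {α β : MF} : S4Thm (α.imp β) → S4Thm α → S4Thm β
  | nec {α : MF} : S4Thm α → S4Thm α.box

/-- Γ ⊢_S4 φ : either φ is a theorem, or some β₁,…,βₙ ∈ Γ (n ≥ 1) give a theorem
β₁ → (β₂ → (… → (βₙ → φ)…)). -/
def S4Deriv (Γ : Set MF) (φ : MF) : Prop :=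
  S4Thm φ ∨ ∃ l : List MF, l ≠ [] ∧ (∀ β ∈ l, β ∈ Γ) ∧ S4Thm (l.foldr MF.imp φ)

/-- Δ is φ-saturated (w.r.t. ⊢_S4). -/
def SatS4 (Δ : Set MF) (φ : MF) : Prop :=
  ¬ S4Deriv Δ φ ∧ ∀ α ∉ Δ, S4Deriv (insert α Δ) φ

open Classical in
/-- The canonical function v_Δ. -/
noncomputable def vDeltaS4 (Δ : Set MF) : MF → V3 :=
  fun α => if MF.box α ∈ Δ then V3.t else if α ∈ Δ then V3.o else V3.z

/-- Λ is closed under (immediate, hence all) subformulas. -/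
def SubClosed (Λ : Set MF) : Prop :=
  (∀ α, MF.neg α ∈ Λ → α ∈ Λ) ∧
  (∀ α, MF.box α ∈ Λ → α ∈ Λ) ∧
  (∀ α β, MF.imp α β ∈ Λ → α ∈ Λ ∧ β ∈ Λ) ∧
  (∀ α β, MF.dis α β ∈ Λ → α ∈ Λ ∧ β ∈ Λ) ∧
  (∀ α β, MF.con α β ∈ Λ → α ∈ Λ ∧ β ∈ Λ)

/-- Partial valuations with domain Λ (modelled as total functions constrained on Λ). -/
def IsPVal (Λ : Set MF) (v : MF → V3) : Prop :=
  (∀ α, MF.neg α ∈ Λ → v (.neg α) ∈ negOp (v α)) ∧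
  (∀ α, MF.box α ∈ Λ → v (.box α) ∈ boxOp (v α)) ∧
  (∀ α β, MF.imp α β ∈ Λ → v (.imp α β) ∈ impOp (v α) (v β)) ∧
  (∀ α β, MF.dis α β ∈ Λ → v (.dis α β) ∈ disOp (v α) (v β)) ∧
  (∀ α β, MF.con α β ∈ Λ → v (.con α β) ∈ conOp (v α) (v β))

/-- PLV'(Λ): partial' level valuations over Λ (witnesses amongst level valuations). -/
def PLV' (Λ : Set MF) : Set (MF → V3) :=
  {v | IsPVal Λ v ∧ ∀ α ∈ Λ, v α = V3.o →
    ∃ w ∈ LVS4, w α = V3.z ∧ ∀ β ∈ Λ, v β = V3.t → w β = V3.t}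

/-- PLV(Λ): partial level valuations over Λ, defined as the largest subset of
PV(Λ) whose condition is witnessed inside itself. -/
def PLV (Λ : Set MF) : Set (MF → V3) :=
  ⋃₀ {S | (∀ v ∈ S, IsPVal Λ v) ∧
      ∀ v ∈ S, ∀ α ∈ Λ, v α = V3.o →
        ∃ w ∈ S, w α = V3.z ∧ ∀ β ∈ Λ, v β = V3.t → w β = V3.t}

/-- Set of subformulas of a modal formula. -/
def MF.subf : MF → Finset MF
  | .var n => {.var n}
  | .neg α => insert (.neg α) α.subf
  | .box α => insert (.box α) α.subf
  | .imp α β => insert (.imp α β) (α.subf ∪ β.subf)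
  | .dis α β => insert (.dis α β) (α.subf ∪ β.subf)
  | .con α β => insert (.con α β) (α.subf ∪ β.subf)

namespace S4Aux

open MF S4Thm

/-! ### §1 Hilbert machinery -/

theorem thm_id (α : MF) : S4Thm (α.imp α) :=
  ((ax2 α (α.imp α) α).mp (ax1 α (α.imp α))).mp (ax1 α α)

theorem thm_K {β : MF} (h : S4Thm β) (α : MF) : S4Thm (α.imp β) :=
  (ax1 β α).mp h

theorem imp_mono {β γ : MF} (α : MF) (h : S4Thm (β.imp γ)) :
    S4Thm ((α.imp β).imp (α.imp γ)) :=
  (ax2 α β γ).mp (thm_K h α)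

theorem imp_trans {α β γ : MF} (h1 : S4Thm (α.imp β)) (h2 : S4Thm (β.imp γ)) :
    S4Thm (α.imp γ) :=
  (imp_mono α h2).mp h1

theorem thm_swap {α β γ : MF} (h : S4Thm (α.imp (β.imp γ))) :
    S4Thm (β.imp (α.imp γ)) :=
  imp_trans (ax1 β α) ((ax2 α β γ).mp h)

theorem ctx_of_thm {X : MF} (l : List MF) (h : S4Thm X) : S4Thm (l.foldr MF.imp X) := by
  induction l with
  | nil => exact h
  | cons a l ih => exact thm_K ih a

theorem fold_distrib (X Y : MF) :
    ∀ l : List MF, S4Thm ((l.foldr MF.imp (X.imp Y)).imp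
      ((l.foldr MF.imp X).imp (l.foldr MF.imp Y)))
  | [] => thm_id _
  | a :: l => imp_trans (imp_mono a (fold_distrib X Y l)) (ax2 a _ _)

theorem ctx_mp {X Y : MF} {l : List MF} (h1 : S4Thm (l.foldr MF.imp (X.imp Y)))
    (h2 : S4Thm (l.foldr MF.imp X)) : S4Thm (l.foldr MF.imp Y) :=
  ((fold_distrib X Y l).mp h1).mp h2

theorem imp_fold (Z : MF) : ∀ l : List MF, S4Thm (Z.imp (l.foldr MF.imp Z))
  | [] => thm_id Z
  | a :: l => imp_trans (imp_fold Z l) (ax1 _ a)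

theorem ctx_mem {X : MF} : ∀ {l : List MF}, X ∈ l → S4Thm (l.foldr MF.imp X) := by
  intro l hX
  induction l with
  | nil => cases hX
  | cons a l ih =>
    rcases List.mem_cons.1 hX with rfl | h
    · exact imp_fold X l
    · exact thm_K (ih h) a

theorem ctx_absorb {X : MF} {L : List MF} :
    ∀ {l : List MF}, (∀ x ∈ l, x ∈ L) → S4Thm (L.foldr MF.imp (l.foldr MF.imp X)) →
      S4Thm (L.foldr MF.imp X) := by
  intro l
  induction l with
  | nil => intro _ h; exact h
  | cons a l ih =>
    intro hsub h
    exact ih (fun x hx => hsub x (List.mem_cons_of_mem a hx))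
      (ctx_mp h (ctx_mem (hsub a (List.mem_cons_self))))

/-- Normal form of derivability. -/
def Drv (Γ : Set MF) (X : MF) : Prop :=
  ∃ l : List MF, (∀ x ∈ l, x ∈ Γ) ∧ S4Thm (l.foldr MF.imp X)

theorem deriv_iff {Γ : Set MF} {X : MF} : S4Deriv Γ X ↔ Drv Γ X := by
  constructor
  · rintro (h | ⟨l, -, hl, ht⟩)
    · exact ⟨[], by simp, h⟩
    · exact ⟨l, hl, ht⟩
  · rintro ⟨l, hl, ht⟩
    cases l with
    | nil => exact Or.inl ht
    | cons a l => exact Or.inr ⟨a :: l, by simp, hl, ht⟩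

theorem drv_of_thm {Γ : Set MF} {X : MF} (h : S4Thm X) : Drv Γ X := ⟨[], by simp, h⟩

theorem drv_of_mem {Γ : Set MF} {X : MF} (h : X ∈ Γ) : Drv Γ X :=
  ⟨[X], by simpa using h, thm_id X⟩

theorem drv_absorb {X : MF} {L : List MF}
    {l : List MF} (hl : ∀ x ∈ l, x ∈ L) (ht : S4Thm (l.foldr MF.imp X)) :
    S4Thm (L.foldr MF.imp X) :=
  ctx_absorb hl (ctx_of_thm L ht)

theorem drv_mp {Γ : Set MF} {X Y : MF} (h1 : Drv Γ (X.imp Y)) (h2 : Drv Γ X) : Drv Γ Y := by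
  obtain ⟨l, hl, htl⟩ := h1
  obtain ⟨m, hm, htm⟩ := h2
  refine ⟨l ++ m, ?_, ?_⟩
  · intro x hx
    rcases List.mem_append.1 hx with h | h
    exacts [hl x h, hm x h]
  have c1 : S4Thm ((l ++ m).foldr MF.imp (X.imp Y)) :=
    ctx_absorb (l := l) (fun x hx => List.mem_append.2 (Or.inl hx)) (ctx_of_thm _ htl)
  have c2 : S4Thm ((l ++ m).foldr MF.imp X) :=
    ctx_absorb (l := m) (fun x hx => List.mem_append.2 (Or.inr hx)) (ctx_of_thm _ htm)
  exact ctx_mp c1 c2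

theorem drv_mono {Γ Γ' : Set MF} {X : MF} (hs : Γ ⊆ Γ') (h : Drv Γ X) : Drv Γ' X := by
  obtain ⟨l, hl, ht⟩ := h
  exact ⟨l, fun x hx => hs (hl x hx), ht⟩

theorem drv_deduction {Γ : Set MF} {A X : MF} (h : Drv (insert A Γ) X) :
    Drv Γ (A.imp X) := by
  classical
  obtain ⟨l, hl, ht⟩ := h
  set m := l.filter (fun x => x ≠ A) with hm
  refine ⟨m, ?_, ?_⟩
  · intro x hx
    have := List.of_mem_filter hx
    have hxl := List.mem_of_mem_filter hx
    have hxA : x ≠ A := by simpa using this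
    rcases hl x hxl with h | h
    · exact absurd h hxA
    · exact h
  · have hsub : ∀ x ∈ l, x ∈ m ++ [A] := by
      intro x hx
      by_cases hxa : x = A
      · subst hxa; simp
      · exact List.mem_append.2 (Or.inl (List.mem_filter.2 ⟨hx, by simpa using hxa⟩))
    have : S4Thm ((m ++ [A]).foldr MF.imp X) := drv_absorb hsub ht
    simpa [List.foldr_append] using this

theorem drv_insert {Γ : Set MF} {A X : MF} (h : Drv Γ (A.imp X)) : Drv (insert A Γ) X :=
  drv_mp (drv_mono (Set.subset_insert A Γ) h) (drv_of_mem (Set.mem_insert A Γ))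

/-! ### §2 Excluded middle and saturated sets -/

theorem thm_em (α : MF) : S4Thm (α.dis α.neg) := by
  set D := α.dis α.neg with hD
  have h1 : S4Thm ((α.imp D.neg).imp α.neg) := (ax9 D α).mp (ax6 α α.neg)
  have h2 : S4Thm (D.neg.imp α.neg) := imp_trans (ax1 D.neg α) h1
  have h1' : S4Thm ((α.neg.imp D.neg).imp α.neg.neg) := (ax9 D α.neg).mp (ax7 α α.neg)
  have h3 : S4Thm (D.neg.imp α.neg.neg) := imp_trans (ax1 D.neg α.neg) h1'
  have h4 : S4Thm D.neg.neg := ((ax9 α.neg D.neg).mp h2).mp h3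
  exact (dne D).mp h4

variable {Δ : Set MF} {φ : MF}

theorem sat_not_drv (h : SatS4 Δ φ) : ¬ Drv Δ φ := fun hd => h.1 (deriv_iff.2 hd)

theorem sat_closed (h : SatS4 Δ φ) {X : MF} (hX : Drv Δ X) : X ∈ Δ := by
  by_contra hXn
  have := deriv_iff.1 (h.2 X hXn)
  exact sat_not_drv h (drv_mp (drv_deduction this) hX)

theorem sat_thm_mem (h : SatS4 Δ φ) {X : MF} (hX : S4Thm X) : X ∈ Δ :=
  sat_closed h (drv_of_thm hX)

theorem sat_mp_mem (h : SatS4 Δ φ) {X Y : MF} (h1 : X.imp Y ∈ Δ) (h2 : X ∈ Δ) : Y ∈ Δ :=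
  sat_closed h (drv_mp (drv_of_mem h1) (drv_of_mem h2))

theorem sat_neg_mem (h : SatS4 Δ φ) {α : MF} : α.neg ∈ Δ ↔ α ∉ Δ := by
  constructor
  · intro hn ha
    exact sat_not_drv h (drv_mp (drv_mp (drv_of_thm (ax10 α φ)) (drv_of_mem ha)) (drv_of_mem hn))
  · intro ha
    by_contra hn
    have d1 : Drv Δ (α.imp φ) := drv_deduction (deriv_iff.1 (h.2 α ha))
    have d2 : Drv Δ (α.neg.imp φ) := drv_deduction (deriv_iff.1 (h.2 α.neg hn))
    have := drv_mp (drv_mp (drv_mp (drv_of_thm (ax8 α α.neg φ)) d1) d2) (drv_of_thm (thm_em α))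
    exact sat_not_drv h this

theorem sat_imp_mem (h : SatS4 Δ φ) {α β : MF} : α.imp β ∈ Δ ↔ (α ∈ Δ → β ∈ Δ) := by
  constructor
  · exact fun h1 h2 => sat_mp_mem h h1 h2
  · intro hi
    by_cases ha : α ∈ Δ
    · exact sat_closed h (drv_mp (drv_of_thm (ax1 β α)) (drv_of_mem (hi ha)))
    · have hn : α.neg ∈ Δ := (sat_neg_mem h).2 ha
      exact sat_closed h (drv_mp (drv_of_thm (thm_swap (ax10 α β))) (drv_of_mem hn))

theorem sat_con_mem (h : SatS4 Δ φ) {α β : MF} : α.con β ∈ Δ ↔ (α ∈ Δ ∧ β ∈ Δ) := by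
  constructor
  · intro hc
    exact ⟨sat_mp_mem h (sat_thm_mem h (ax4 α β)) hc, sat_mp_mem h (sat_thm_mem h (ax5 α β)) hc⟩
  · rintro ⟨ha, hb⟩
    exact sat_mp_mem h (sat_mp_mem h (sat_thm_mem h (ax3 α β)) ha) hb

theorem sat_dis_mem (h : SatS4 Δ φ) {α β : MF} : α.dis β ∈ Δ ↔ (α ∈ Δ ∨ β ∈ Δ) := by
  constructor
  · intro hd
    by_contra hc
    push_neg at hc
    have d1 : Drv Δ (α.imp φ) := drv_deduction (deriv_iff.1 (h.2 α hc.1))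
    have d2 : Drv Δ (β.imp φ) := drv_deduction (deriv_iff.1 (h.2 β hc.2))
    exact sat_not_drv h (drv_mp (drv_mp (drv_mp (drv_of_thm (ax8 α β φ)) d1) d2) (drv_of_mem hd))
  · rintro (ha | hb)
    · exact sat_mp_mem h (sat_thm_mem h (ax6 α β)) ha
    · exact sat_mp_mem h (sat_thm_mem h (ax7 α β)) hb

theorem sat_box_T (h : SatS4 Δ φ) {α : MF} (hb : α.box ∈ Δ) : α ∈ Δ :=
  sat_mp_mem h (sat_thm_mem h (axT α)) hb

theorem sat_box_4 (h : SatS4 Δ φ) {α : MF} (hb : α.box ∈ Δ) : α.box.box ∈ Δ :=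
  sat_mp_mem h (sat_thm_mem h (axFour α)) hb

theorem sat_not_mem_of (h : SatS4 Δ φ) : φ ∉ Δ := fun hm => sat_not_drv h (drv_of_mem hm)

/-! ### §3 Lindenbaum -/

theorem lindenbaum {Γ : Set MF} {φ : MF} (h : ¬ S4Deriv Γ φ) :
    ∃ Δ, Γ ⊆ Δ ∧ SatS4 Δ φ := by
  classical
  set S : Set (Set MF) := {Δ | Γ ⊆ Δ ∧ ¬ Drv Δ φ} with hS
  have hΓS : Γ ∈ S := ⟨subset_rfl, fun hd => h (deriv_iff.2 hd)⟩
  have hzorn : ∀ c ⊆ S, IsChain (fun x1 x2 => x1 ⊆ x2) c → c.Nonempty →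
      ∃ ub ∈ S, ∀ s ∈ c, s ⊆ ub := by
    intro c hcS hchain hne
    refine ⟨⋃₀ c, ⟨?_, ?_⟩, fun s hs => Set.subset_sUnion_of_mem hs⟩
    · obtain ⟨s, hs⟩ := hne
      exact (hcS hs).1.trans (Set.subset_sUnion_of_mem hs)
    · rintro ⟨l, hl, ht⟩
      have : ∃ s ∈ c, ∀ x ∈ l, x ∈ s := by
        clear ht
        induction l with
        | nil => obtain ⟨s, hs⟩ := hne; exact ⟨s, hs, by simp⟩
        | cons a l ih =>
          obtain ⟨s, hsc, hsl⟩ := ih (fun x hx => hl x (List.mem_cons_of_mem a hx))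
          obtain ⟨t', htc, hta⟩ := hl a List.mem_cons_self
          rcases eq_or_ne s t' with rfl | hst
          · refine ⟨s, hsc, ?_⟩
            intro x hx
            rcases List.mem_cons.1 hx with rfl | hx
            exacts [hta, hsl x hx]
          · rcases hchain hsc htc hst with hle | hle
            · refine ⟨t', htc, ?_⟩
              intro x hx
              rcases List.mem_cons.1 hx with rfl | hx
              exacts [hta, hle (hsl x hx)]
            · refine ⟨s, hsc, ?_⟩
              intro x hx
              rcases List.mem_cons.1 hx with rfl | hx
              exacts [hle hta, hsl x hx]
      obtain ⟨s, hsc, hss⟩ := this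
      exact (hcS hsc).2 ⟨l, fun x hx => hss x hx, ht⟩
  obtain ⟨Δ, hsub, hmax⟩ := zorn_subset_nonempty S hzorn Γ hΓS
  refine ⟨Δ, hsub, ⟨fun hd => hmax.1.2 (deriv_iff.1 hd), ?_⟩⟩
  intro α ha
  by_contra hd
  have hmem : insert α Δ ∈ S :=
    ⟨hsub.trans (Set.subset_insert _ _), fun hdd => hd (deriv_iff.2 hdd)⟩
  have := hmax.2 hmem (Set.subset_insert α Δ)
  exact ha (this (Set.mem_insert α Δ))

/-! ### §4 Kripke semantics -/

structure KM where
  W : Type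
  R : W → W → Prop
  refl : ∀ x, R x x
  trans : ∀ {x y z}, R x y → R y z → R x z
  val : W → ℕ → Prop

def forces (M : KM) : M.W → MF → Prop
  | x, .var n => M.val x n
  | x, .neg a => ¬ forces M x a
  | x, .box a => ∀ y, M.R x y → forces M y a
  | x, .imp a b => forces M x a → forces M x b
  | x, .dis a b => forces M x a ∨ forces M x b
  | x, .con a b => forces M x a ∧ forces M x b

def boxed (M : KM) (x : M.W) (a : MF) : Prop := ∀ y, M.R x y → forces M y a

theorem forces_of_boxed {M : KM} {x : M.W} {a : MF} (h : boxed M x a) : forces M x a :=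
  h x (M.refl x)

open Classical in
noncomputable def kval (M : KM) (x : M.W) : MF → V3 :=
  fun a => if boxed M x a then V3.t else if forces M x a then V3.o else V3.z

theorem kval_eq_t {M : KM} {x : M.W} {a : MF} : kval M x a = V3.t ↔ boxed M x a := by
  unfold kval
  split
  · simp [*]
  · split <;> simp [*]

theorem kval_eq_o {M : KM} {x : M.W} {a : MF} :
    kval M x a = V3.o ↔ (forces M x a ∧ ¬ boxed M x a) := by
  unfold kval
  split
  · rename_i h; simp [h]
  · split <;> simp [*]

theorem kval_eq_z {M : KM} {x : M.W} {a : MF} : kval M x a = V3.z ↔ ¬ forces M x a := by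
  unfold kval
  split
  · rename_i h; simp [forces_of_boxed h]
  · split <;> simp [*]

theorem kval_des {M : KM} {x : M.W} {a : MF} : kval M x a ∈ Des ↔ forces M x a := by
  unfold kval Des
  split
  · rename_i h; simp [forces_of_boxed h]
  · split <;> simp [*]

theorem mem_ot {v : V3} (h : v ≠ V3.z) : v ∈ ({V3.o, V3.t} : Set V3) := by
  cases v <;> simp_all

theorem boxed_box {M : KM} {x : M.W} {a : MF} : boxed M x a.box ↔ boxed M x a := by
  constructor
  · intro h y hy
    exact h x (M.refl x) y hy
  · intro h y hy z hz
    exact h z (M.trans hy hz)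

theorem kval_isVal (M : KM) (x : M.W) : IsVal (kval M x) := by
  refine ⟨?_, ?_, ?_, ?_, ?_⟩
  · -- neg
    intro a
    by_cases hf : forces M x a
    · have h1 : kval M x (a.neg) = V3.z := kval_eq_z.2 (by simp [forces, hf])
      rcases h : kval M x a with _ | _ | _
      · exact absurd (kval_eq_z.1 h) (by simp [hf])
      · simp [negOp, h1]
      · simp [negOp, h1]
    · have h0 : kval M x a = V3.z := kval_eq_z.2 hf
      have : kval M x (a.neg) ≠ V3.z := by
        rw [Ne, kval_eq_z]
        simp [forces, hf]
      simpa [negOp, h0] using mem_ot this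
  · -- box
    intro a
    by_cases hb : boxed M x a
    · have : kval M x a.box = V3.t := kval_eq_t.2 (boxed_box.2 hb)
      simp [kval_eq_t.2 hb, boxOp, this]
    · have hz : kval M x a.box = V3.z := by
        rw [kval_eq_z]
        show ¬ boxed M x a
        exact hb
      rcases h : kval M x a with _ | _ | _
      · simp [boxOp, hz]
      · simp [boxOp, hz]
      · exact absurd (kval_eq_t.1 h) hb
  · -- imp
    intro a b
    rcases ha : kval M x a with _ | _ | _ <;> rcases hb : kval M x b with _ | _ | _
    · -- z z
      rw [kval_eq_z] at ha
      have : kval M x (a.imp b) ≠ V3.z := by rw [Ne, kval_eq_z]; simp [forces, ha]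
      simpa [impOp] using mem_ot this
    · rw [kval_eq_z] at ha
      have : kval M x (a.imp b) ≠ V3.z := by rw [Ne, kval_eq_z]; simp [forces, ha]
      simpa [impOp] using mem_ot this
    · rw [kval_eq_t] at hb
      have : kval M x (a.imp b) = V3.t := kval_eq_t.2 (fun y hy => by
        intro _; exact hb y hy)
      simp [impOp, this]
    · -- o z
      rw [kval_eq_o] at ha; rw [kval_eq_z] at hb
      have : kval M x (a.imp b) = V3.z := kval_eq_z.2 (by
        simp only [forces]; intro h; exact hb (h ha.1))
      simp [impOp, this]
    · rw [kval_eq_o] at ha; rw [kval_eq_o] at hb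
      have : kval M x (a.imp b) ≠ V3.z := by
        rw [Ne, kval_eq_z]; simp [forces]; intro; exact hb.1
      simpa [impOp] using mem_ot this
    · rw [kval_eq_t] at hb
      have : kval M x (a.imp b) = V3.t := kval_eq_t.2 (fun y hy => by
        intro _; exact hb y hy)
      simp [impOp, this]
    · -- t z
      rw [kval_eq_t] at ha; rw [kval_eq_z] at hb
      have : kval M x (a.imp b) = V3.z := kval_eq_z.2 (by
        simp only [forces]; intro h; exact hb (h (forces_of_boxed ha)))
      simp [impOp, this]
    · -- t o
      rw [kval_eq_t] at ha; rw [kval_eq_o] at hb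
      have : kval M x (a.imp b) = V3.o := kval_eq_o.2 ⟨by
        simp only [forces]; intro _; exact hb.1, by
        intro hbox
        exact hb.2 (fun y hy => (hbox y hy) (ha y hy))⟩
      simp [impOp, this]
    · rw [kval_eq_t] at hb
      have : kval M x (a.imp b) = V3.t := kval_eq_t.2 (fun y hy => by
        intro _; exact hb y hy)
      simp [impOp, this]
  · -- dis
    intro a b
    rcases ha : kval M x a with _ | _ | _ <;> rcases hb : kval M x b with _ | _ | _
    · rw [kval_eq_z] at ha hb
      have : kval M x (a.dis b) = V3.z := kval_eq_z.2 (by simp [forces, ha, hb])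
      simp [disOp, this]
    · rw [kval_eq_o] at hb
      have : kval M x (a.dis b) ≠ V3.z := by
        rw [Ne, kval_eq_z]; simp [forces]; exact fun _ => hb.1
      simpa [disOp] using mem_ot this
    · rw [kval_eq_t] at hb
      have : kval M x (a.dis b) = V3.t := kval_eq_t.2 (fun y hy => Or.inr (hb y hy))
      simp [disOp, this]
    · rw [kval_eq_o] at ha
      have : kval M x (a.dis b) ≠ V3.z := by
        rw [Ne, kval_eq_z]; simp [forces]; exact fun h => absurd ha.1 h
      simpa [disOp] using mem_ot this
    · rw [kval_eq_o] at ha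
      have : kval M x (a.dis b) ≠ V3.z := by
        rw [Ne, kval_eq_z]; simp [forces]; exact fun h => absurd ha.1 h
      simpa [disOp] using mem_ot this
    · rw [kval_eq_t] at hb
      have : kval M x (a.dis b) = V3.t := kval_eq_t.2 (fun y hy => Or.inr (hb y hy))
      simp [disOp, this]
    · rw [kval_eq_t] at ha
      have : kval M x (a.dis b) = V3.t := kval_eq_t.2 (fun y hy => Or.inl (ha y hy))
      simp [disOp, this]
    · rw [kval_eq_t] at ha
      have : kval M x (a.dis b) = V3.t := kval_eq_t.2 (fun y hy => Or.inl (ha y hy))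
      simp [disOp, this]
    · rw [kval_eq_t] at ha
      have : kval M x (a.dis b) = V3.t := kval_eq_t.2 (fun y hy => Or.inl (ha y hy))
      simp [disOp, this]
  · -- con
    intro a b
    rcases ha : kval M x a with _ | _ | _ <;> rcases hb : kval M x b with _ | _ | _
    · rw [kval_eq_z] at ha
      have : kval M x (a.con b) = V3.z := kval_eq_z.2 (by simp [forces, ha])
      simp [conOp, this]
    · rw [kval_eq_z] at ha
      have : kval M x (a.con b) = V3.z := kval_eq_z.2 (by simp [forces, ha])
      simp [conOp, this]
    · rw [kval_eq_z] at ha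
      have : kval M x (a.con b) = V3.z := kval_eq_z.2 (by simp [forces, ha])
      simp [conOp, this]
    · rw [kval_eq_z] at hb
      have : kval M x (a.con b) = V3.z := kval_eq_z.2 (by simp [forces, hb])
      simp [conOp, this]
    · rw [kval_eq_o] at ha hb
      have : kval M x (a.con b) = V3.o := kval_eq_o.2 ⟨⟨ha.1, hb.1⟩, by
        intro hbox; exact ha.2 (fun y hy => (hbox y hy).1)⟩
      simp [conOp, this]
    · rw [kval_eq_o] at ha; rw [kval_eq_t] at hb
      have : kval M x (a.con b) = V3.o := kval_eq_o.2 ⟨⟨ha.1, forces_of_boxed hb⟩, by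
        intro hbox; exact ha.2 (fun y hy => (hbox y hy).1)⟩
      simp [conOp, this]
    · rw [kval_eq_z] at hb
      have : kval M x (a.con b) = V3.z := kval_eq_z.2 (by simp [forces, hb])
      simp [conOp, this]
    · rw [kval_eq_t] at ha; rw [kval_eq_o] at hb
      have : kval M x (a.con b) = V3.o := kval_eq_o.2 ⟨⟨forces_of_boxed ha, hb.1⟩, by
        intro hbox; exact hb.2 (fun y hy => (hbox y hy).2)⟩
      simp [conOp, this]
    · rw [kval_eq_t] at ha hb
      have : kval M x (a.con b) = V3.t := kval_eq_t.2 (fun y hy => ⟨ha y hy, hb y hy⟩)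
      simp [conOp, this]

theorem kval_mem_level : ∀ (k : ℕ) (M : KM) (x : M.W), kval M x ∈ LevelS4 k := by
  intro k
  induction k with
  | zero => intro M x; exact kval_isVal M x
  | succ k ih =>
    intro M x
    refine ⟨ih M x, ?_⟩
    intro a ha
    rw [kval_eq_t]
    intro y hy
    exact kval_des.1 (ha (kval M y) (ih M y))

theorem kval_mem_LVS4 (M : KM) (x : M.W) : kval M x ∈ LVS4 :=
  Set.mem_iInter.2 (fun k => kval_mem_level k M x)

/-! ### §5 Soundness of H_S4 w.r.t. level valuations -/

def dd : V3 → Bool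
  | .z => false
  | _ => true

theorem des_iff {v : V3} : v ∈ Des ↔ dd v = true := by
  cases v <;> simp [Des, dd]

theorem dd_neg {x r : V3} (h : r ∈ negOp x) : dd r = !dd x := by
  cases x <;> cases r <;> simp_all [negOp, dd]

theorem dd_imp {x y r : V3} (h : r ∈ impOp x y) : dd r = (!dd x || dd y) := by
  cases x <;> cases y <;> cases r <;> simp_all [impOp, dd]

theorem dd_dis {x y r : V3} (h : r ∈ disOp x y) : dd r = (dd x || dd y) := by
  cases x <;> cases y <;> cases r <;> simp_all [disOp, dd]

theorem dd_con {x y r : V3} (h : r ∈ conOp x y) : dd r = (dd x && dd y) := by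
  cases x <;> cases y <;> cases r <;> simp_all [conOp, dd]

section valu

variable {v : MF → V3}

theorem v_neg (hv : IsVal v) (a : MF) : dd (v (a.neg)) = !dd (v a) := dd_neg (hv.1 a)
theorem v_imp (hv : IsVal v) (a b : MF) : dd (v (a.imp b)) = (!dd (v a) || dd (v b)) := dd_imp (hv.2.2.1 a b)
theorem v_dis (hv : IsVal v) (a b : MF) : dd (v (a.dis b)) = (dd (v a) || dd (v b)) := dd_dis (hv.2.2.2.1 a b)
theorem v_con (hv : IsVal v) (a b : MF) : dd (v (a.con b)) = (dd (v a) && dd (v b)) := dd_con (hv.2.2.2.2 a b)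

theorem des_mp (hv : IsVal v) {a b : MF} (h1 : v (a.imp b) ∈ Des) (h2 : v a ∈ Des) : v b ∈ Des := by
  rw [des_iff] at *
  rw [v_imp hv] at h1
  cases h : dd (v b)
  · rw [h, h2] at h1; simp at h1
  · rfl

theorem v_box_t (hv : IsVal v) {a : MF} (h : v a = V3.t) : v a.box = V3.t := by
  have := hv.2.1 a
  rw [h] at this
  simpa [boxOp] using this

theorem v_box_z (hv : IsVal v) {a : MF} (h : v a ≠ V3.t) : v a.box = V3.z := by
  have := hv.2.1 a
  cases ha : v a <;> rw [ha] at this <;> simp_all [boxOp]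

end valu

theorem level_succ_subset (k : ℕ) : LevelS4 (k+1) ⊆ LevelS4 k := fun _ hv => hv.1

theorem level_le {j k : ℕ} (h : j ≤ k) : LevelS4 k ⊆ LevelS4 j := by
  induction h with
  | refl => exact subset_rfl
  | step h ih => exact fun v hv => ih (level_succ_subset _ hv)

theorem level_isVal {k : ℕ} {v : MF → V3} (h : v ∈ LevelS4 k) : IsVal v :=
  level_le (Nat.zero_le k) h

def ValidAt (k : ℕ) (a : MF) : Prop := ∀ w ∈ LevelS4 k, w a ∈ Des

theorem thm_valid {a : MF} (h : S4Thm a) : ∃ k, ValidAt k a := by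
  induction h with
  | ax1 α β =>
    refine ⟨0, fun w hw => ?_⟩
    have hv : IsVal w := hw
    rw [des_iff, v_imp hv, v_imp hv]
    cases dd (w α) <;> cases dd (w β) <;> rfl
  | ax2 α β γ =>
    refine ⟨0, fun w hw => ?_⟩
    have hv : IsVal w := hw
    rw [des_iff]
    simp only [v_imp hv]
    cases dd (w α) <;> cases dd (w β) <;> cases dd (w γ) <;> rfl
  | ax3 α β =>
    refine ⟨0, fun w hw => ?_⟩
    have hv : IsVal w := hw
    rw [des_iff]
    simp only [v_imp hv, v_con hv]
    cases dd (w α) <;> cases dd (w β) <;> rfl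
  | ax4 α β =>
    refine ⟨0, fun w hw => ?_⟩
    have hv : IsVal w := hw
    rw [des_iff]
    simp only [v_imp hv, v_con hv]
    cases dd (w α) <;> cases dd (w β) <;> rfl
  | ax5 α β =>
    refine ⟨0, fun w hw => ?_⟩
    have hv : IsVal w := hw
    rw [des_iff]
    simp only [v_imp hv, v_con hv]
    cases dd (w α) <;> cases dd (w β) <;> rfl
  | ax6 α β =>
    refine ⟨0, fun w hw => ?_⟩
    have hv : IsVal w := hw
    rw [des_iff]
    simp only [v_imp hv, v_dis hv]
    cases dd (w α) <;> cases dd (w β) <;> rfl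
  | ax7 α β =>
    refine ⟨0, fun w hw => ?_⟩
    have hv : IsVal w := hw
    rw [des_iff]
    simp only [v_imp hv, v_dis hv]
    cases dd (w α) <;> cases dd (w β) <;> rfl
  | ax8 α β γ =>
    refine ⟨0, fun w hw => ?_⟩
    have hv : IsVal w := hw
    rw [des_iff]
    simp only [v_imp hv, v_dis hv]
    cases dd (w α) <;> cases dd (w β) <;> cases dd (w γ) <;> rfl
  | ax9 α β =>
    refine ⟨0, fun w hw => ?_⟩
    have hv : IsVal w := hw
    rw [des_iff]
    simp only [v_imp hv, v_neg hv]
    cases dd (w α) <;> cases dd (w β) <;> rfl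
  | ax10 α β =>
    refine ⟨0, fun w hw => ?_⟩
    have hv : IsVal w := hw
    rw [des_iff]
    simp only [v_imp hv, v_neg hv]
    cases dd (w α) <;> cases dd (w β) <;> rfl
  | dne α =>
    refine ⟨0, fun w hw => ?_⟩
    have hv : IsVal w := hw
    rw [des_iff]
    simp only [v_imp hv, v_neg hv]
    cases dd (w α) <;> rfl
  | axK α β =>
    refine ⟨0, fun w hw => ?_⟩
    have hv : IsVal w := hw
    by_cases hab : w (α.imp β) = V3.t
    · by_cases ha : w α = V3.t
      · have hb : w β = V3.t := by
          have := hv.2.2.1 α β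
          rw [ha, hab] at this
          cases hbv : w β <;> rw [hbv] at this <;> simp_all [impOp]
        rw [des_iff]
        simp only [v_imp hv]
        rw [v_box_t hv hb]
        cases dd (w (α.imp β).box) <;> cases dd (w α.box) <;> simp [dd]
      · have : w α.box = V3.z := v_box_z hv ha
        rw [des_iff]
        simp only [v_imp hv]
        rw [this]
        cases dd (w (α.imp β).box) <;> cases dd (w β.box) <;> simp [dd]
    · have : w (α.imp β).box = V3.z := v_box_z hv hab
      rw [des_iff]
      simp only [v_imp hv]
      rw [this]
      cases dd (w α.box) <;> cases dd (w β.box) <;> simp [dd]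
  | axT α =>
    refine ⟨0, fun w hw => ?_⟩
    have hv : IsVal w := hw
    by_cases ha : w α = V3.t
    · rw [des_iff]
      simp only [v_imp hv]
      rw [ha]
      cases dd (w α.box) <;> simp [dd]
    · rw [des_iff]
      simp only [v_imp hv]
      rw [v_box_z hv ha]
      cases dd (w α) <;> simp [dd]
  | axFour α =>
    refine ⟨0, fun w hw => ?_⟩
    have hv : IsVal w := hw
    by_cases ha : w α = V3.t
    · rw [des_iff]
      simp only [v_imp hv]
      rw [v_box_t hv (v_box_t hv ha)]
      cases dd (w α.box) <;> simp [dd]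
    · rw [des_iff]
      simp only [v_imp hv]
      rw [v_box_z hv ha]
      simp [dd]
  | mp h1 h2 ih1 ih2 =>
    obtain ⟨k1, hk1⟩ := ih1
    obtain ⟨k2, hk2⟩ := ih2
    refine ⟨max k1 k2, fun w hw => ?_⟩
    have hv : IsVal w := level_isVal hw
    exact des_mp hv (hk1 w (level_le (le_max_left k1 k2) hw))
      (hk2 w (level_le (le_max_right k1 k2) hw))
  | nec h ih =>
    obtain ⟨k, hk⟩ := ih
    refine ⟨k + 1, fun w hw => ?_⟩
    have hv : IsVal w := level_isVal hw
    have : w _ = V3.t := hw.2 _ hk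
    rw [des_iff, v_box_t hv this]
    rfl

theorem thm_t {a : MF} (h : S4Thm a) {v : MF → V3} (hv : v ∈ LVS4) : v a = V3.t := by
  obtain ⟨k, hk⟩ := thm_valid h
  exact (Set.mem_iInter.1 hv (k+1)).2 a hk

theorem drv_sound {Γ : Set MF} {a : MF} (h : Drv Γ a) {v : MF → V3} (hv : v ∈ LVS4)
    (hΓ : ∀ g ∈ Γ, v g ∈ Des) : v a ∈ Des := by
  obtain ⟨l, hl, ht⟩ := h
  have hIsVal : IsVal v := level_isVal (Set.mem_iInter.1 hv 0)
  have hfold : v (l.foldr MF.imp a) ∈ Des := by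
    rw [thm_t ht hv]; simp [Des]
  clear ht
  induction l with
  | nil => exact hfold
  | cons x l ih =>
    exact ih (fun y hy => hl y (List.mem_cons_of_mem x hy))
      (des_mp hIsVal hfold (hΓ x (hl x List.mem_cons_self)))

/-! ### §6 Canonical model -/

def CW : Type := {Δ : Set MF // ∃ ψ, SatS4 Δ ψ}

def canR (Δ Δ' : CW) : Prop := ∀ a : MF, a.box ∈ Δ.1 → a.box ∈ Δ'.1

def canM : KM where
  W := CW
  R := canR
  refl := fun _ _ h => h
  trans := fun h1 h2 a ha => h2 a (h1 a ha)
  val := fun Δ n => MF.var n ∈ Δ.1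

theorem thm_box_fold (a : MF) :
    ∀ l : List MF, S4Thm ((l.foldr MF.imp a).box.imp ((l.map MF.box).foldr MF.imp a.box))
  | [] => thm_id _
  | x :: l =>
    imp_trans (axK x (l.foldr MF.imp a)) (imp_mono x.box (thm_box_fold a l))

theorem canon_succ {Δ : CW} {a : MF} (h : a.box ∉ Δ.1) :
    ∃ Δ' : CW, canR Δ Δ' ∧ a ∉ Δ'.1 := by
  obtain ⟨ψ, hsat⟩ := Δ.2
  set Γb : Set MF := {x | ∃ b : MF, x = b.box ∧ b.box ∈ Δ.1} with hΓb
  have hnd : ¬ S4Deriv Γb a := by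
    intro hd
    obtain ⟨l, hl, ht⟩ := deriv_iff.1 hd
    have h1 : S4Thm ((l.map MF.box).foldr MF.imp a.box) :=
      (thm_box_fold a l).mp (S4Thm.nec ht)
    have h2 : Drv Δ.1 a.box := by
      refine ⟨l.map MF.box, ?_, h1⟩
      intro x hx
      obtain ⟨y, hyl, rfl⟩ := List.mem_map.1 hx
      obtain ⟨b, rfl, hb⟩ := hl y hyl
      exact sat_box_4 hsat hb
    exact h (sat_closed hsat h2)
  obtain ⟨Δ', hsub, hsat'⟩ := lindenbaum hnd
  refine ⟨⟨Δ', ⟨a, hsat'⟩⟩, ?_, sat_not_mem_of hsat'⟩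
  intro b hb
  exact hsub ⟨b, rfl, hb⟩

theorem canon_truth : ∀ (a : MF) (Δ : CW), forces canM Δ a ↔ a ∈ Δ.1 := by
  intro a
  induction a with
  | var n => intro Δ; exact Iff.rfl
  | neg a ih =>
    intro Δ
    obtain ⟨ψ, hsat⟩ := Δ.2
    show ¬ forces canM Δ a ↔ _
    rw [ih Δ, sat_neg_mem hsat]
  | box a ih =>
    intro Δ
    constructor
    · intro hf
      by_contra hb
      obtain ⟨Δ', hR, ha⟩ := canon_succ hb
      exact ha ((ih Δ').1 (hf Δ' hR))
    · intro hb Δ' hR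
      obtain ⟨ψ', hsat'⟩ := Δ'.2
      exact (ih Δ').2 (sat_box_T hsat' (hR a hb))
  | imp a b iha ihb =>
    intro Δ
    obtain ⟨ψ, hsat⟩ := Δ.2
    show (forces canM Δ a → forces canM Δ b) ↔ _
    rw [iha Δ, ihb Δ, sat_imp_mem hsat]
  | dis a b iha ihb =>
    intro Δ
    obtain ⟨ψ, hsat⟩ := Δ.2
    show (forces canM Δ a ∨ forces canM Δ b) ↔ _
    rw [iha Δ, ihb Δ, sat_dis_mem hsat]
  | con a b iha ihb =>
    intro Δ
    obtain ⟨ψ, hsat⟩ := Δ.2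
    show (forces canM Δ a ∧ forces canM Δ b) ↔ _
    rw [iha Δ, ihb Δ, sat_con_mem hsat]

/-! ### §7 The glued model and analyticity -/

def Tb (Λ : Set MF) (vp : MF → V3) : Set MF :=
  {x | ∃ b : MF, b ∈ Λ ∧ vp b = V3.t ∧ x = b.box}

def bigR (Λ : Set MF) (vp : MF → V3) (pick : MF → CW) :
    Option CW → Option CW → Prop
  | none, none => True
  | none, some w => ∃ a, a ∈ Λ ∧ vp a = V3.o ∧ canR (pick a) w
  | some w, some w' => canR w w'
  | some _, none => False

def bigM (Λ : Set MF) (vp : MF → V3) (pick : MF → CW) : KM where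
  W := Option CW
  R := bigR Λ vp pick
  refl := by
    rintro (_ | w)
    · trivial
    · exact fun a h => h
  trans := by
    rintro (_ | x) (_ | y) (_ | z) h1 h2 <;> try trivial
    · exact ⟨h1.choose, h1.choose_spec.1, h1.choose_spec.2.1,
        fun a ha => h2 a (h1.choose_spec.2.2 a ha)⟩
    · exact fun a ha => h2 a (h1 a ha)
  val := fun x n =>
    match x with
    | none => vp (MF.var n) ∈ Des
    | some Δ => MF.var n ∈ Δ.1

variable {Λ : Set MF} {vp : MF → V3} {pick : MF → CW}

theorem big_emb : ∀ (a : MF) (w : CW),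
    forces (bigM Λ vp pick) (some w) a ↔ forces canM w a := by
  intro a
  induction a with
  | var n => intro w; exact Iff.rfl
  | neg a ih =>
    intro w
    show ¬ _ ↔ ¬ _
    rw [ih w]
  | box a ih =>
    intro w
    constructor
    · intro hf y hy
      exact (ih y).1 (hf (some y) hy)
    · rintro hf (_ | y) hy
      · cases hy
      · exact (ih y).2 (hf y hy)
  | imp a b iha ihb =>
    intro w
    show (_ → _) ↔ (_ → _)
    rw [iha w, ihb w]
  | dis a b iha ihb =>
    intro w
    show (_ ∨ _) ↔ (_ ∨ _)
    rw [iha w, ihb w]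
  | con a b iha ihb =>
    intro w
    show (_ ∧ _) ↔ (_ ∧ _)
    rw [iha w, ihb w]

theorem big_box_root
    (hpick : ∀ a, a ∈ Λ → vp a = V3.o → a ∉ (pick a).1 ∧ Tb Λ vp ⊆ (pick a).1)
    {b : MF} (hb : b ∈ Λ)
    (hib : forces (bigM Λ vp pick) none b ↔ vp b ∈ Des) :
    forces (bigM Λ vp pick) none b.box ↔ vp b = V3.t := by
  constructor
  · intro hf
    rcases h : vp b with _ | _ | _
    · exfalso
      have : forces (bigM Λ vp pick) none b := hf none trivial
      have := hib.1 this
      rw [h] at this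
      simp [Des] at this
    · exfalso
      have hR : bigR Λ vp pick none (some (pick b)) := ⟨b, hb, h, fun a ha => ha⟩
      have := hf (some (pick b)) hR
      have hmem := (canon_truth b (pick b)).1 ((big_emb b (pick b)).1 this)
      exact (hpick b hb h).1 hmem
    · rfl
  · intro ht
    rintro (_ | w) hy
    · exact hib.2 (by rw [ht]; simp [Des])
    · obtain ⟨a, haΛ, hao, hcan⟩ := hy
      have hTb : b.box ∈ Tb Λ vp := ⟨b, hb, ht, rfl⟩
      have h1 : b.box ∈ (pick a).1 := (hpick a haΛ hao).2 hTb
      have h2 : b.box ∈ w.1 := hcan b h1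
      obtain ⟨ψ, hsat⟩ := w.2
      exact (big_emb b w).2 ((canon_truth b w).2 (sat_box_T hsat h2))

theorem big_root_truth (hcl : SubClosed Λ) (hpv : IsPVal Λ vp)
    (hpick : ∀ a, a ∈ Λ → vp a = V3.o → a ∉ (pick a).1 ∧ Tb Λ vp ⊆ (pick a).1) :
    ∀ a : MF, a ∈ Λ → (forces (bigM Λ vp pick) none a ↔ vp a ∈ Des) := by
  intro a
  induction a with
  | var n => intro _; exact Iff.rfl
  | neg a ih =>
    intro hΛ
    have haΛ : a ∈ Λ := hcl.1 a hΛ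
    have hmem := hpv.1 a hΛ
    show ¬ _ ↔ _
    rw [ih haΛ]
    rcases h1 : vp a <;> rw [h1] at hmem <;>
      rcases h2 : vp a.neg <;> rw [h2] at hmem <;>
      simp_all [negOp, Des]
  | box a ih =>
    intro hΛ
    have haΛ : a ∈ Λ := hcl.2.1 a hΛ
    have hmem := hpv.2.1 a hΛ
    rw [big_box_root hpick haΛ (ih haΛ)]
    rcases h1 : vp a <;> rw [h1] at hmem <;>
      rcases h2 : vp a.box <;> rw [h2] at hmem <;>
      simp_all [boxOp, Des]
  | imp a b iha ihb =>
    intro hΛ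
    obtain ⟨haΛ, hbΛ⟩ := hcl.2.2.1 a b hΛ
    have hmem := hpv.2.2.1 a b hΛ
    show (_ → _) ↔ _
    rw [iha haΛ, ihb hbΛ]
    rcases h1 : vp a <;> rw [h1] at hmem <;>
      rcases h2 : vp b <;> rw [h2] at hmem <;>
      rcases h3 : vp (a.imp b) <;> rw [h3] at hmem <;>
      simp_all [impOp, Des]
  | dis a b iha ihb =>
    intro hΛ
    obtain ⟨haΛ, hbΛ⟩ := hcl.2.2.2.1 a b hΛ
    have hmem := hpv.2.2.2.1 a b hΛ
    show (_ ∨ _) ↔ _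
    rw [iha haΛ, ihb hbΛ]
    rcases h1 : vp a <;> rw [h1] at hmem <;>
      rcases h2 : vp b <;> rw [h2] at hmem <;>
      rcases h3 : vp (a.dis b) <;> rw [h3] at hmem <;>
      simp_all [disOp, Des]
  | con a b iha ihb =>
    intro hΛ
    obtain ⟨haΛ, hbΛ⟩ := hcl.2.2.2.2 a b hΛ
    have hmem := hpv.2.2.2.2 a b hΛ
    show (_ ∧ _) ↔ _
    rw [iha haΛ, ihb hbΛ]
    rcases h1 : vp a <;> rw [h1] at hmem <;>
      rcases h2 : vp b <;> rw [h2] at hmem <;>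
      rcases h3 : vp (a.con b) <;> rw [h3] at hmem <;>
      simp_all [conOp, Des]

theorem cw_nonempty : Nonempty CW := by
  have h0 : ¬ S4Deriv (∅ : Set MF) (MF.var 0) := by
    intro hd
    set M0 : KM := ⟨PUnit, fun _ _ => True, fun _ => trivial, fun _ _ => trivial,
      fun _ _ => False⟩ with hM0
    have hv := kval_mem_LVS4 M0 PUnit.unit
    have : kval M0 PUnit.unit (MF.var 0) ∈ Des :=
      drv_sound (deriv_iff.1 hd) hv (by simp)
    rw [kval_des] at this
    exact this
  obtain ⟨Δ, _, hsat⟩ := lindenbaum h0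
  exact ⟨⟨Δ, ⟨_, hsat⟩⟩⟩

end S4Aux

/-- Analyticity for R(M'_S4): every member of PLV'(Λ) extends to a
level valuation. -/
theorem s4_analyticity (Λ : Set MF) (hne : Λ.Nonempty) (hcl : SubClosed Λ)
    (vp : MF → V3) (hvp : vp ∈ PLV' Λ) :
    ∃ v ∈ LVS4, ∀ α ∈ Λ, v α = vp α := by
  classical
  obtain ⟨hpv, hwit⟩ := hvp
  obtain ⟨d0⟩ := S4Aux.cw_nonempty
  have hP : ∀ a, a ∈ Λ → vp a = V3.o →
      ∃ Δ' : S4Aux.CW, a ∉ Δ'.1 ∧ S4Aux.Tb Λ vp ⊆ Δ'.1 := by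
    intro a haΛ hao
    obtain ⟨w, hwL, hwa, hwT⟩ := hwit a haΛ hao
    have hnd : ¬ S4Deriv (S4Aux.Tb Λ vp) a := by
      intro hd
      have hdes : w a ∈ Des := by
        refine S4Aux.drv_sound (S4Aux.deriv_iff.1 hd) hwL ?_
        rintro x ⟨b, hbΛ, hbt, rfl⟩
        have hbt' : w b = V3.t := hwT b hbΛ hbt
        have hIsVal : IsVal w := S4Aux.level_isVal (Set.mem_iInter.1 hwL 0)
        rw [S4Aux.v_box_t hIsVal hbt']
        simp [Des]
      rw [hwa] at hdes
      simp [Des] at hdes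
    obtain ⟨Δ', hsub, hsat'⟩ := S4Aux.lindenbaum hnd
    exact ⟨⟨Δ', ⟨a, hsat'⟩⟩, S4Aux.sat_not_mem_of hsat', hsub⟩
  let pick : MF → S4Aux.CW := fun a =>
    if h : a ∈ Λ ∧ vp a = V3.o then (hP a h.1 h.2).choose else d0
  have hpick : ∀ a, a ∈ Λ → vp a = V3.o →
      a ∉ (pick a).1 ∧ S4Aux.Tb Λ vp ⊆ (pick a).1 := by
    intro a h1 h2
    have he : pick a = (hP a h1 h2).choose := dif_pos ⟨h1, h2⟩
    rw [he]
    exact (hP a h1 h2).choose_spec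
  have hroot := S4Aux.big_root_truth (pick := pick) hcl hpv hpick
  refine ⟨S4Aux.kval (S4Aux.bigM Λ vp pick) none,
    S4Aux.kval_mem_LVS4 (S4Aux.bigM Λ vp pick) none, ?_⟩
  intro a haΛ
  rcases h : vp a with _ | _ | _
  · refine S4Aux.kval_eq_z.2 ?_
    intro hf
    have := (hroot a haΛ).1 hf
    rw [h] at this
    simp [Des] at this
  · refine S4Aux.kval_eq_o.2 ?_
    refine ⟨(hroot a haΛ).2 (by rw [h]; simp [Des]), ?_⟩
    intro hbox
    have := (S4Aux.big_box_root hpick haΛ (hroot a haΛ)).1 hbox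
    rw [h] at this
    simp at this
  · refine S4Aux.kval_eq_t.2 ?_
    exact (S4Aux.big_box_root hpick haΛ (hroot a haΛ)).2 h
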